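/- arXiv:1110.3286 — 5 statements merged into one kernel-verified Lean document; each statement's English description precedes it below -/
import Mathlib

section
/- (Siegel's Lemma, special case M = 1) Let a₁,…,aₙ be integers, not all zero, with n ≥ 2 and |aᵢ| ≤ B for all i, where B ≥ 1. Then there exists a nonzero integer vector (x₁,…,xₙ) with Σ aᵢxᵢ = 0 and |xᵢ| ≤ (nB)^{1/(n-1)} for all i. -/
attribute [local instance] Matrix.seminormedAddCommGroup

/-- Siegel's Lemma, special case M = 1: if a₁,…,aₙ are integers, not all zero, with
n ≥ 2 and |aᵢ| ≤ B (B ≥ 1), then there is a nonzero integer vector x with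
Σ aᵢxᵢ = 0 and |xᵢ| ≤ (nB)^{1/(n-1)} for all i. -/
theorem siegel_lemma_one_row (n : ℕ) (hn : 2 ≤ n) (a : Fin n → ℤ) (ha : a ≠ 0)
    (B : ℤ) (hB : 1 ≤ B) (hab : ∀ i, |a i| ≤ B) :
    ∃ x : Fin n → ℤ, x ≠ 0 ∧ (∑ i, a i * x i) = 0 ∧
      ∀ i, (|x i| : ℝ) ≤ ((n : ℝ) * (B : ℝ)) ^ ((1 : ℝ) / ((n : ℝ) - 1)) := by
  set A : Matrix (Fin 1) (Fin n) ℤ := Matrix.of (fun _ => a) with hA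
  have hAne : A ≠ 0 := by
    intro h
    apply ha
    funext j
    have := congrFun (congrFun h 0) j
    simpa [hA] using this
  have hcard : Fintype.card (Fin 1) < Fintype.card (Fin n) := by simp; omega
  obtain ⟨t, ht0, htA, htn⟩ :=
    Int.Matrix.exists_ne_zero_int_vec_norm_le' A hcard (by simp) hAne
  refine ⟨t, ht0, ?_, ?_⟩
  · have := congrFun htA 0
    simpa [Matrix.mulVec, dotProduct, hA] using this
  · intro i
    have hnormA : ‖A‖ ≤ (B : ℝ) := by
      rw [Matrix.norm_le_iff (by positivity)]
      intro k j
      rw [Int.norm_eq_abs, ← Int.cast_abs]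
      exact_mod_cast hab j
    have h1 : (|t i| : ℝ) ≤ ‖t‖ := by
      have := norm_le_pi_norm t i
      rwa [Int.norm_eq_abs] at this
    simp only [Fintype.card_fin, Nat.cast_one] at htn
    refine h1.trans (htn.trans ?_)
    have h2 : (2:ℝ) ≤ (n:ℝ) := by exact_mod_cast hn
    apply Real.rpow_le_rpow (by positivity)
      (mul_le_mul_of_nonneg_left hnormA (by positivity))
      (div_nonneg zero_le_one (by linarith))
end

section
/- Let n ≥ 2 and let φ: ℤⁿ → ℤ be a group homomorphism that is nonzero on every nonzero element of the cube [-R,R]ⁿ (R a positive natural number). Let C = max_i |φ(eᵢ)| where e₁,…,eₙ is the standard basis. Then C ≥ (R - n)^{n-1} / nⁿ. -/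
/-- Lower bound for discriminating homomorphisms ℤⁿ → ℤ: if φ is nonzero on every
nonzero element of the cube [-R,R]ⁿ and C = max_i |φ(eᵢ)|, then C ≥ (R-n)^{n-1}/nⁿ. -/
theorem discriminating_lower_bound (n R : ℕ) (hn : 2 ≤ n) (hR : 0 < R)
    (φ : (Fin n → ℤ) →+ ℤ)
    (hφ : ∀ t : Fin n → ℤ, t ≠ 0 → (∀ i, |t i| ≤ (R : ℤ)) → φ t ≠ 0)
    (C : ℤ) (hC : IsGreatest {c : ℤ | ∃ i : Fin n, c = |φ (Pi.single i 1)|} C) :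
    ((R : ℝ) - (n : ℝ)) ^ (n - 1) / (n : ℝ) ^ n ≤ (C : ℝ) := by
  classical
  obtain ⟨⟨i₀, hi₀⟩, hub⟩ := hC
  have hRZ : (1:ℤ) ≤ (R:ℤ) := by exact_mod_cast hR
  -- C ≥ 1
  have hsingle_ne : (Pi.single i₀ (1:ℤ) : Fin n → ℤ) ≠ 0 := by
    intro h
    have := congrFun h i₀
    simp at this
  have hsingle_bd : ∀ j, |(Pi.single i₀ (1:ℤ) : Fin n → ℤ) j| ≤ (R:ℤ) := by
    intro j
    rcases eq_or_ne j i₀ with h | h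
    · subst h; simpa using hRZ
    · rw [Pi.single_eq_of_ne h, abs_zero]; linarith
  have hC1 : 1 ≤ C := by
    rw [hi₀]
    exact Int.one_le_abs (hφ _ hsingle_ne hsingle_bd)
  -- expansion of φ
  have hexp : ∀ t : Fin n → ℤ, φ t = ∑ i, t i * φ (Pi.single i 1) := by
    intro t
    conv_lhs => rw [← Finset.univ_sum_single t]
    rw [map_sum]
    refine Finset.sum_congr rfl fun i _ => ?_
    have h1 : (Pi.single i (t i) : Fin n → ℤ) = t i • Pi.single i (1:ℤ) := by
      ext j
      rcases eq_or_ne j i with h | h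
      · subst h; simp
      · simp [Pi.single_apply, h]
    rw [h1, map_zsmul, smul_eq_mul]
  -- bound on values
  have hbd : ∀ t : Fin n → ℤ, (∀ i, |t i| ≤ (R:ℤ)) → |φ t| ≤ (n:ℤ) * R * C := by
    intro t ht
    rw [hexp t]
    calc |∑ i, t i * φ (Pi.single i 1)| ≤ ∑ i, |t i * φ (Pi.single i 1)| :=
          Finset.abs_sum_le_sum_abs _ _
      _ ≤ ∑ _i : Fin n, (R:ℤ) * C := by
          refine Finset.sum_le_sum fun i _ => ?_
          rw [abs_mul]
          have h1 : |φ (Pi.single i 1)| ≤ C := hub ⟨i, rfl⟩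
          have h2 : (0:ℤ) ≤ |t i| := abs_nonneg _
          exact mul_le_mul (ht i) h1 (abs_nonneg _) (by linarith [ht i])
      _ = (n:ℤ) * R * C := by
          rw [Finset.sum_const, Finset.card_univ, Fintype.card_fin]
          push_cast; ring
  -- counting argument
  set S : Finset (Fin n → ℤ) := Finset.Icc 0 (fun _ => (R:ℤ)) with hS
  set T : Finset ℤ := Finset.Icc (-((n:ℤ)*R*C)) ((n:ℤ)*R*C) with hT
  have hmem : ∀ t ∈ S, φ t ∈ T := by
    intro t ht
    rw [hS, Finset.mem_Icc] at ht
    obtain ⟨h0, h1⟩ := ht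
    simp only [Pi.le_def, Pi.zero_apply] at h0 h1
    rw [hT, Finset.mem_Icc, ← abs_le]
    refine hbd t fun i => ?_
    rw [abs_le]
    exact ⟨by linarith [h0 i, h1 i], h1 i⟩
  have hinj : Set.InjOn (fun t => φ t) S := by
    intro s hs t ht hst
    rw [hS, Finset.coe_Icc, Set.mem_Icc] at hs ht
    simp only [Pi.le_def, Pi.zero_apply] at hs ht
    by_contra hne
    have hd : s - t ≠ 0 := sub_ne_zero.mpr hne
    refine hφ (s - t) hd (fun i => ?_) ?_
    · rw [abs_le, Pi.sub_apply]
      constructor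
      · linarith [hs.1 i, ht.2 i]
      · linarith [hs.2 i, ht.1 i]
    · simp [map_sub, hst]
  have hcard := Finset.card_le_card_of_injOn (fun t => φ t) hmem hinj
  have hScard : S.card = (R+1)^n := by
    rw [hS, Pi.card_Icc]
    simp [Int.card_Icc]
  have hTcard : T.card = (2*(n:ℤ)*R*C + 1).toNat := by
    rw [hT, Int.card_Icc]
    congr 1
    ring
  have hnpos : (0:ℤ) < (n:ℤ) := by exact_mod_cast (by omega : 0 < n)
  have hCpos : (0:ℤ) < (n:ℤ)*R*C :=
    mul_pos (mul_pos hnpos (by exact_mod_cast hR)) (lt_of_lt_of_le zero_lt_one hC1)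
  have key : ((R:ℤ)+1)^n ≤ 2*(n:ℤ)*R*C + 1 := by
    rw [hScard, hTcard] at hcard
    have := (Int.toNat_of_nonneg (by linarith : (0:ℤ) ≤ 2*(n:ℤ)*R*C + 1))
    calc ((R:ℤ)+1)^n = ((R+1)^n : ℕ) := by push_cast; ring
      _ ≤ ((2*(n:ℤ)*R*C + 1).toNat : ℤ) := by exact_mod_cast hcard
      _ = 2*(n:ℤ)*R*C + 1 := this
  -- now the arithmetic: show (R-n)^(n-1) ≤ n^n * C in ℤ
  have main : ((R:ℤ) - n)^(n-1) ≤ (n:ℤ)^n * C := by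
    have hnZ : (2:ℤ) ≤ (n:ℤ) := by exact_mod_cast hn
    rcases le_or_gt (R:ℤ) (n:ℤ) with hle | hlt
    · -- easy case: |(R-n)^(n-1)| ≤ n^(n-1) ≤ n^n ≤ n^n * C
      have h1 : ((R:ℤ) - n)^(n-1) ≤ |((R:ℤ) - n)^(n-1)| := le_abs_self _
      have h2 : |((R:ℤ) - n)^(n-1)| = |(R:ℤ) - n|^(n-1) := by rw [abs_pow]
      have h3 : |(R:ℤ) - n| ≤ (n:ℤ) := by
        rw [abs_le]; constructor <;> linarith
      have h4 : |(R:ℤ) - n|^(n-1) ≤ (n:ℤ)^(n-1) :=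
        pow_le_pow_left₀ (abs_nonneg _) h3 _
      have h5 : (n:ℤ)^(n-1) ≤ (n:ℤ)^n := pow_le_pow_right₀ (by linarith) (by omega)
      calc ((R:ℤ) - n)^(n-1) ≤ (n:ℤ)^(n-1) := by rw [← h2] at h4; linarith
        _ ≤ (n:ℤ)^n := h5
        _ ≤ (n:ℤ)^n * C := le_mul_of_one_le_right (by positivity) hC1
    · -- hard case: R > n
      have hbin : (R:ℤ)^n + 1 ≤ ((R:ℤ)+1)^n := by
        have h1 : (R:ℤ)^n < ((R:ℤ)+1)^n :=
          pow_lt_pow_left₀ (by linarith) (by linarith) (by omega)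
        linarith
      have hRn : (R:ℤ)^n ≤ 2*(n:ℤ)*R*C := by linarith
      set A : ℤ := ((R:ℤ) - n)^(n-1) with hA
      set B : ℤ := (R:ℤ)^(n-1) with hB
      set N : ℤ := (n:ℤ)^(n-1) with hN
      have hpow : ∀ a : ℤ, a^n = a^(n-1) * a := fun a => by
        conv_lhs => rw [show n = (n-1)+1 by omega]
        rw [pow_succ]
      have h3 : A ≤ B := pow_le_pow_left₀ (by linarith) (by linarith) _
      have h2 : (2:ℤ) ≤ N := le_trans hnZ (le_self_pow₀ (by linarith) (by omega))
      have hnRpos : (0:ℤ) < 2*(n:ℤ)*R := by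
        have : (0:ℤ) < (R:ℤ) := by exact_mod_cast hR
        positivity
      have step1 : A * (2*(n:ℤ)*R) ≤ (2*(n:ℤ)*C) * (2*(n:ℤ)*R) := by
        calc A * (2*(n:ℤ)*R) ≤ B * (2*(n:ℤ)*R) :=
              mul_le_mul_of_nonneg_right h3 (le_of_lt hnRpos)
          _ = 2*(n:ℤ) * ((R:ℤ)^n) := by rw [hpow (R:ℤ)]; ring
          _ ≤ 2*(n:ℤ) * (2*(n:ℤ)*R*C) := by
              refine mul_le_mul_of_nonneg_left hRn (by linarith)
          _ = (2*(n:ℤ)*C) * (2*(n:ℤ)*R) := by ring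
      have step2 : A ≤ 2*(n:ℤ)*C := le_of_mul_le_mul_right step1 hnRpos
      have hnC : (0:ℤ) ≤ (n:ℤ)*C := by positivity
      have step3 : 2*((n:ℤ)*C) ≤ N*((n:ℤ)*C) := mul_le_mul_of_nonneg_right h2 hnC
      calc A ≤ 2*(n:ℤ)*C := step2
        _ ≤ N*((n:ℤ)*C) := by linarith
        _ = (n:ℤ)^n * C := by rw [hpow (n:ℤ)]; ring
  -- conclude
  have hnR : (0:ℝ) < (n:ℝ)^n := by positivity
  rw [div_le_iff₀ hnR]
  have : (((R:ℤ) - n)^(n-1) : ℝ) ≤ (((n:ℤ)^n * C : ℤ) : ℝ) := by exact_mod_cast main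
  push_cast at this
  linarith [this]
end

section
/- The ℤ-discriminating complexity of ℤⁿ with respect to the standard basis is asymptotically dominated by the polynomial R ↦ R^{n-1}: there is a constant K such that for every R, there exists a homomorphism φ_R: ℤⁿ → ℤ with φ_R(t) ≠ 0 for every nonzero t of word length at most R (with respect to the standard basis), and max_i |φ_R(eᵢ)| ≤ K·R^{n-1} + K. -/
lemma base_nonzero {n : ℕ} (R : ℕ) (t : Fin n → ℤ) (ht : t ≠ 0)
    (hb : (∑ i, |t i|) ≤ (R : ℤ)) :
    (∑ i, t i * ((2 * R + 1 : ℕ) : ℤ) ^ (i : ℕ)) ≠ 0 := by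
  set b : ℤ := ((2 * R + 1 : ℕ) : ℤ) with hbdef
  have hb1 : (1 : ℤ) ≤ b := by rw [hbdef]; exact_mod_cast Nat.le_add_left 1 (2 * R)
  have hb0 : (0 : ℤ) ≤ b := by linarith
  have hRb : (R : ℤ) < b := by rw [hbdef]; push_cast; linarith [Nat.cast_nonneg (α := ℤ) R]
  have hs : (Finset.univ.filter (fun i => t i ≠ 0)).Nonempty := by
    obtain ⟨i, hi⟩ := Function.ne_iff.mp ht
    exact ⟨i, by simpa using hi⟩
  set s := Finset.univ.filter (fun i => t i ≠ 0) with hsdef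
  obtain ⟨j, hjs, hjmax⟩ := s.exists_max_image id hs
  have htj : t j ≠ 0 := by simpa [hsdef] using hjs
  have htj1 : (1 : ℤ) ≤ |t j| := Int.one_le_abs (by simpa using htj)
  have hsum : ∑ i, t i * b ^ (i : ℕ) = t j * b ^ (j : ℕ) + ∑ i ∈ s.erase j, t i * b ^ (i : ℕ) := by
    rw [← Finset.sum_subset (Finset.subset_univ s) (fun i _ hi => by
      have : t i = 0 := by simpa [hsdef] using hi
      simp [this])]
    rw [← Finset.add_sum_erase _ _ hjs]
  have hlt : ∀ i ∈ s.erase j, (i : ℕ) < (j : ℕ) := by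
    intro i hi
    have hij : i ≠ j := (Finset.mem_erase.mp hi).1
    have h1 := hjmax i (Finset.mem_of_mem_erase hi)
    have h2 : (i : ℕ) ≤ (j : ℕ) := Fin.le_def.mp h1
    exact lt_of_le_of_ne h2 (fun h => hij (Fin.ext h))
  by_cases hj0 : (j : ℕ) = 0
  · have he : s.erase j = ∅ := by
      rw [Finset.eq_empty_iff_forall_notMem]
      intro i hi
      exact absurd (hlt i hi) (by omega)
    rw [hsum, he]
    have hbne : b ^ (j : ℕ) ≠ 0 := pow_ne_zero _ (by linarith)
    simpa using mul_ne_zero htj hbne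
  · obtain ⟨m, hm⟩ : ∃ m, (j : ℕ) = m + 1 := ⟨(j : ℕ) - 1, by omega⟩
    have hpm : (1 : ℤ) ≤ b ^ m := one_le_pow₀ hb1
    have htail : |∑ i ∈ s.erase j, t i * b ^ (i : ℕ)| ≤ (R : ℤ) * b ^ m := by
      calc |∑ i ∈ s.erase j, t i * b ^ (i : ℕ)|
          ≤ ∑ i ∈ s.erase j, |t i * b ^ (i : ℕ)| := Finset.abs_sum_le_sum_abs _ _
        _ = ∑ i ∈ s.erase j, |t i| * b ^ (i : ℕ) := by
            refine Finset.sum_congr rfl fun i _ => ?_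
            rw [abs_mul, abs_pow, abs_of_nonneg hb0]
        _ ≤ ∑ i ∈ s.erase j, |t i| * b ^ m := by
            refine Finset.sum_le_sum fun i hi => ?_
            exact mul_le_mul_of_nonneg_left
              (pow_le_pow_right₀ hb1 (by have := hlt i hi; omega)) (abs_nonneg _)
        _ = (∑ i ∈ s.erase j, |t i|) * b ^ m := by rw [Finset.sum_mul]
        _ ≤ (R : ℤ) * b ^ m := by
            refine mul_le_mul_of_nonneg_right ?_ (by positivity)
            refine le_trans ?_ hb
            exact Finset.sum_le_sum_of_subset_of_nonneg (Finset.subset_univ _)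
              (fun i _ _ => abs_nonneg _)
    have hhead : (R : ℤ) * b ^ m < |t j * b ^ (j : ℕ)| := by
      rw [abs_mul, abs_pow, abs_of_nonneg hb0]
      calc (R : ℤ) * b ^ m < b * b ^ m :=
            mul_lt_mul_of_pos_right hRb (by positivity)
        _ = b ^ (j : ℕ) := by rw [hm, pow_succ]; ring
        _ ≤ |t j| * b ^ (j : ℕ) := le_mul_of_one_le_left (by positivity) htj1
    intro h0
    rw [hsum] at h0
    have heq : t j * b ^ (j : ℕ) = -(∑ i ∈ s.erase j, t i * b ^ (i : ℕ)) := by linarith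
    rw [heq, abs_neg] at hhead
    linarith

/-- The ℤ-discriminating complexity of ℤⁿ is asymptotically dominated by R^{n-1}:
there is K such that for every R there is a homomorphism φ_R : ℤⁿ → ℤ nonzero on
all nonzero elements of word length at most R, with max_i |φ_R(eᵢ)| ≤ K·R^{n-1}+K. -/
theorem free_abelian_upper_bound (n : ℕ) (hn : 1 ≤ n) :
    ∃ K : ℕ, ∀ R : ℕ, ∃ φ : (Fin n → ℤ) →+ ℤ,
      (∀ t : Fin n → ℤ, t ≠ 0 → (∑ i, |t i|) ≤ (R : ℤ) → φ t ≠ 0) ∧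
      ∀ i, |φ (Pi.single i 1)| ≤ (K : ℤ) * (R : ℤ) ^ (n - 1) + (K : ℤ) := by
  refine ⟨3 ^ (n - 1), fun R => ?_⟩
  set b : ℤ := ((2 * R + 1 : ℕ) : ℤ) with hbdef
  have hb1 : (1 : ℤ) ≤ b := by rw [hbdef]; exact_mod_cast Nat.le_add_left 1 (2 * R)
  refine ⟨{ toFun := fun t => ∑ i, t i * b ^ (i : ℕ)
            map_zero' := by simp
            map_add' := by intro x y; simp [add_mul, Finset.sum_add_distrib] }, ?_, ?_⟩
  · intro t ht hle
    exact base_nonzero R t ht hle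
  · intro i
    have hval : (∑ j, (Pi.single i (1 : ℤ) : Fin n → ℤ) j * b ^ (j : ℕ)) = b ^ (i : ℕ) := by
      rw [Finset.sum_eq_single i]
      · simp
      · intro j _ hj
        simp [Pi.single_apply, hj]
      · simp
    show |∑ j, (Pi.single i (1 : ℤ) : Fin n → ℤ) j * b ^ (j : ℕ)| ≤ _
    rw [hval, abs_pow, abs_of_nonneg (by linarith)]
    have h1 : b ^ (i : ℕ) ≤ b ^ (n - 1) :=
      pow_le_pow_right₀ hb1 (by omega)
    refine h1.trans ?_
    rcases Nat.eq_zero_or_pos R with hR | hR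
    · subst hR
      have : b = 1 := by norm_num [hbdef]
      rw [this, one_pow]
      push_cast
      have h3 : (1 : ℤ) ≤ 3 ^ (n - 1) := one_le_pow₀ (by norm_num)
      have h0 : (0 : ℤ) ≤ 3 ^ (n - 1) * (0:ℤ) ^ (n - 1) :=
        mul_nonneg (by linarith) (pow_nonneg le_rfl _)
      linarith
    · have hb3 : b ≤ 3 * (R : ℤ) := by
        rw [hbdef]; push_cast; omega
      have h2 : b ^ (n - 1) ≤ (3 * (R : ℤ)) ^ (n - 1) :=
        pow_le_pow_left₀ (by linarith) hb3 _
      refine h2.trans ?_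
      rw [mul_pow]
      push_cast
      nlinarith [pow_nonneg (by norm_num : (0:ℤ) ≤ 3) (n-1),
        pow_nonneg (by exact_mod_cast Nat.zero_le R : (0:ℤ) ≤ (R:ℤ)) (n-1)]
end

section
/- The ℤ-discriminating complexity of ℤⁿ is asymptotically equivalent to R^{n-1}: the minimal complexity C(R) of a homomorphism ℤⁿ → ℤ which is nonzero on all nonzero elements of the radius-R word-metric ball satisfies C ≈ (R ↦ R^{n-1}). -/
lemma phi_eq {n : ℕ} (φ : (Fin n → ℤ) →+ ℤ) (t : Fin n → ℤ) :
    φ t = ∑ i, t i * φ (Pi.single i 1) := by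
  conv_lhs => rw [← Finset.univ_sum_single t]
  rw [map_sum]
  refine Finset.sum_congr rfl fun i _ => ?_
  have h : Pi.single i (t i) = t i • (Pi.single i 1 : Fin n → ℤ) := by
    ext j; by_cases h : j = i <;> simp [Pi.single_apply, h]
  rw [h, map_zsmul, smul_eq_mul]

lemma base_rep (R : ℕ) : ∀ (m : ℕ) (b : ℕ → ℤ), (∀ i < m, |b i| ≤ (R:ℤ)) →
    (∑ i ∈ Finset.range m, b i * ((R:ℤ)+1)^i) = 0 → ∀ i < m, b i = 0 := by
  intro m
  induction m with
  | zero => intro b _ _ i hi; omega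
  | succ m ih =>
    intro b hb hsum i hi
    rw [Finset.sum_range_succ'] at hsum
    have hfac : ∑ i ∈ Finset.range m, b (i+1) * ((R:ℤ)+1)^(i+1)
        = ((R:ℤ)+1) * ∑ i ∈ Finset.range m, b (i+1) * ((R:ℤ)+1)^i := by
      rw [Finset.mul_sum]
      refine Finset.sum_congr rfl fun j _ => ?_
      ring
    rw [hfac] at hsum
    simp only [pow_zero, mul_one] at hsum
    have hdvd : ((R:ℤ)+1) ∣ b 0 := ⟨-(∑ i ∈ Finset.range m, b (i+1) * ((R:ℤ)+1)^i), by linarith⟩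
    have hb0 : b 0 = 0 := Int.eq_zero_of_abs_lt_dvd hdvd
      (lt_of_le_of_lt (hb 0 (by omega)) (by linarith))
    have hS : (∑ i ∈ Finset.range m, b (i+1) * ((R:ℤ)+1)^i) = 0 := by
      have hR1 : ((R:ℤ)+1) ≠ 0 := by positivity
      have := hsum
      rw [hb0, add_zero] at this
      exact (mul_eq_zero.mp this).resolve_left hR1
    have := ih (fun j => b (j+1)) (fun j hj => hb (j+1) (by omega)) hS
    rcases i with _ | j
    · exact hb0
    · exact this j (by omega)

lemma mem_S (n R : ℕ) (hn : 1 ≤ n) :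
    ∃ φ : (Fin n → ℤ) →+ ℤ,
      (∀ t : Fin n → ℤ, t ≠ 0 → (∑ i, |t i|) ≤ (R : ℤ) → φ t ≠ 0) ∧
      ∀ i, |φ (Pi.single i 1)| ≤ (((R+1)^(n-1) : ℕ) : ℤ) := by
  refine ⟨{ toFun := fun t => ∑ i : Fin n, ((R:ℤ)+1)^(i.val) * t i,
            map_zero' := by simp,
            map_add' := fun x y => by simp [mul_add, Finset.sum_add_distrib] }, ?_, ?_⟩
  · intro t ht hR hzero
    simp only [AddMonoidHom.coe_mk, ZeroHom.coe_mk] at hzero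
    set b : ℕ → ℤ := fun j => if h : j < n then t ⟨j, h⟩ else 0 with hbdef
    have hconv : (∑ i : Fin n, ((R:ℤ)+1)^(i.val) * t i)
        = ∑ j ∈ Finset.range n, b j * ((R:ℤ)+1)^j := by
      rw [← Fin.sum_univ_eq_sum_range (fun j => b j * ((R:ℤ)+1)^j) n]
      refine Finset.sum_congr rfl fun i _ => ?_
      simp [hbdef, i.isLt, mul_comm]
    have hb : ∀ j < n, |b j| ≤ (R:ℤ) := by
      intro j hj
      simp only [hbdef, dif_pos hj]
      calc |t ⟨j, hj⟩| ≤ ∑ i, |t i| :=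
            Finset.single_le_sum (fun i _ => abs_nonneg (t i)) (Finset.mem_univ _)
        _ ≤ (R:ℤ) := hR
    have := base_rep R n b hb (by rw [← hconv]; exact hzero)
    apply ht
    funext i
    have := this i i.isLt
    simpa [hbdef, i.isLt] using this
  · intro i
    simp only [AddMonoidHom.coe_mk, ZeroHom.coe_mk]
    have : (∑ j : Fin n, ((R:ℤ)+1)^(j.val) * (Pi.single i 1 : Fin n → ℤ) j) = ((R:ℤ)+1)^(i.val) := by
      rw [Finset.sum_eq_single i]
      · simp
      · intro j _ hj; simp [Pi.single_apply, hj]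
      · simp
    rw [this]
    have h1 : (0:ℤ) ≤ (R:ℤ)+1 := by positivity
    rw [abs_of_nonneg (by positivity), Nat.cast_pow]
    push_cast
    exact pow_le_pow_right₀ (by linarith) (by omega)

lemma count_lem (n R c : ℕ) (hn : 2 ≤ n) (φ : (Fin n → ℤ) →+ ℤ)
    (hdisc : ∀ t : Fin n → ℤ, t ≠ 0 → (∑ i, |t i|) ≤ ((2*n*R : ℕ) : ℤ) → φ t ≠ 0)
    (hc : ∀ i, |φ (Pi.single i 1)| ≤ (c:ℤ)) :
    R ^ (n-1) ≤ 2*n*c := by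
  rcases Nat.eq_zero_or_pos R with hR0 | hRpos
  · subst hR0; rw [Nat.zero_pow (by omega)]; exact Nat.zero_le _
  set B : Finset (Fin n → ℤ) := Fintype.piFinset (fun _ => Finset.Icc 0 (R:ℤ)) with hB
  have hcardB : B.card = (R+1)^n := by
    rw [hB, Fintype.card_piFinset]
    simp [Int.card_Icc]
  set M : ℤ := (n : ℤ) * c * R with hM
  have hMnonneg : 0 ≤ M := by positivity
  have hmaps : ∀ t ∈ B, φ t ∈ Finset.Icc (-M) M := by
    intro t htB
    have htmem : ∀ i, t i ∈ Finset.Icc (0:ℤ) (R:ℤ) := by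
      intro i; exact (Fintype.mem_piFinset.mp htB) i
    have habs : |φ t| ≤ M := by
      rw [phi_eq]
      calc |∑ i, t i * φ (Pi.single i 1)| ≤ ∑ i, |t i * φ (Pi.single i 1)| :=
            Finset.abs_sum_le_sum_abs _ _
        _ ≤ ∑ _i : Fin n, (R:ℤ) * c := by
            refine Finset.sum_le_sum fun i _ => ?_
            rw [abs_mul]
            have h1 : |t i| ≤ (R:ℤ) := by
              have := Finset.mem_Icc.mp (htmem i)
              rw [abs_of_nonneg this.1]; exact this.2
            exact mul_le_mul h1 (hc i) (abs_nonneg _) (by positivity)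
        _ = M := by rw [Finset.sum_const]; simp [hM]; ring
    rw [Finset.mem_Icc]
    constructor <;> [linarith [neg_abs_le (φ t)]; linarith [le_abs_self (φ t)]]
  have hinj : Set.InjOn φ B := by
    intro t ht s hs heq
    by_contra hne
    have hts : t - s ≠ 0 := sub_ne_zero.mpr hne
    have hsum : (∑ i, |(t - s) i|) ≤ ((2*n*R : ℕ) : ℤ) := by
      have : ∀ i, |(t-s) i| ≤ (R:ℤ) := by
        intro i
        have h1 := Finset.mem_Icc.mp ((Fintype.mem_piFinset.mp ht) i)
        have h2 := Finset.mem_Icc.mp ((Fintype.mem_piFinset.mp hs) i)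
        rw [Pi.sub_apply, abs_le]; constructor <;> linarith
      calc (∑ i, |(t - s) i|) ≤ ∑ _i : Fin n, (R:ℤ) := Finset.sum_le_sum fun i _ => this i
        _ = (n:ℤ) * R := by rw [Finset.sum_const]; simp
        _ ≤ ((2*n*R : ℕ) : ℤ) := by push_cast; nlinarith [Nat.cast_nonneg (α := ℤ) n, Nat.cast_nonneg (α := ℤ) R]
    exact hdisc (t - s) hts hsum (by rw [map_sub, heq, sub_self])
  have hcard : (R+1)^n ≤ 2*(n*c*R) + 1 := by
    have := Finset.card_le_card_of_injOn φ hmaps hinj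
    rw [hcardB, Int.card_Icc] at this
    have h2 : (M + 1 - -M).toNat = 2*(n*c*R) + 1 := by
      have hMe : M = ((n*c*R : ℕ) : ℤ) := by rw [hM]; push_cast; ring
      rw [hMe]; omega
    omega
  have hstep : R * (R+1)^(n-1) + 1 ≤ (R+1)^n := by
    have : (R+1)^n = R * (R+1)^(n-1) + (R+1)^(n-1) := by
      conv_lhs => rw [show n = (n-1) + 1 by omega]
      rw [pow_succ]
      ring
    have hpos : 1 ≤ (R+1)^(n-1) := Nat.one_le_pow _ _ (by omega)
    omega
  have hcancel : (R+1)^(n-1) ≤ 2*n*c := by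
    have h3 : R * (R+1)^(n-1) ≤ R * (2*n*c) := by
      calc R * (R+1)^(n-1) ≤ 2*(n*c*R) := by omega
        _ = R * (2*n*c) := by ring
    exact Nat.le_of_mul_le_mul_left h3 hRpos
  calc R^(n-1) ≤ (R+1)^(n-1) := Nat.pow_le_pow_left (by omega) _
    _ ≤ 2*n*c := hcancel

/-- The ℤ-discriminating complexity of ℤⁿ is asymptotically equivalent to R^{n-1}. -/
theorem free_abelian_complexity (n : ℕ) (hn : 2 ≤ n) (C : ℕ → ℕ)
    (hC : ∀ R : ℕ, C R = sInf {c : ℕ | ∃ φ : (Fin n → ℤ) →+ ℤ,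
        (∀ t : Fin n → ℤ, t ≠ 0 → (∑ i, |t i|) ≤ (R : ℤ) → φ t ≠ 0) ∧
        ∀ i, |φ (Pi.single i 1)| ≤ (c : ℤ)}) :
    (∃ K : ℕ, ∀ R : ℕ, C R ≤ K * (K * R) ^ (n - 1) + K) ∧
    (∃ K : ℕ, ∀ R : ℕ, R ^ (n - 1) ≤ K * C (K * R) + K) := by
  constructor
  · refine ⟨2, fun R => ?_⟩
    have hmem : (R+1)^(n-1) ∈ {c : ℕ | ∃ φ : (Fin n → ℤ) →+ ℤ,
        (∀ t : Fin n → ℤ, t ≠ 0 → (∑ i, |t i|) ≤ (R : ℤ) → φ t ≠ 0) ∧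
        ∀ i, |φ (Pi.single i 1)| ≤ (((R+1)^(n-1) : ℕ) : ℤ)} := mem_S n R (by omega)
    have h1 : C R ≤ (R+1)^(n-1) := by rw [hC]; exact Nat.sInf_le hmem
    rcases Nat.eq_zero_or_pos R with h | h
    · subst h; simpa using h1.trans (by simp)
    · have h2 : (R+1)^(n-1) ≤ (2*R)^(n-1) :=
        Nat.pow_le_pow_left (by omega) _
      calc C R ≤ (R+1)^(n-1) := h1
        _ ≤ (2*R)^(n-1) := h2
        _ ≤ 2 * (2*R)^(n-1) + 2 := by omega
  · refine ⟨2*n, fun R => ?_⟩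
    set S : Set ℕ := {c : ℕ | ∃ φ : (Fin n → ℤ) →+ ℤ,
        (∀ t : Fin n → ℤ, t ≠ 0 → (∑ i, |t i|) ≤ ((2*n*R : ℕ) : ℤ) → φ t ≠ 0) ∧
        ∀ i, |φ (Pi.single i 1)| ≤ (c : ℤ)} with hS
    have hne : S.Nonempty := ⟨(2*n*R+1)^(n-1), mem_S n (2*n*R) (by omega)⟩
    have hCval : C (2*n*R) = sInf S := by rw [hC]
    have hmem : C (2*n*R) ∈ S := by rw [hCval]; exact Nat.sInf_mem hne
    obtain ⟨φ, hdisc, hc⟩ := hmem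
    have := count_lem n R (C (2*n*R)) hn φ hdisc hc
    omega
end

section
/- In a δ-hyperbolic geodesic metric space, for points x, y, z and a broken geodesic [x,y] ∪ [y,z] (concatenation of geodesics from x to y and y to z), every subpath of the broken geodesic is a (1, 2⟨x|z⟩_y + 2δ)-quasigeodesic, where ⟨x|z⟩_y = ½(d(y,x) + d(y,z) − d(x,z)) is the Gromov product. -/
/-- `f` parameterizes a geodesic from `x` to `y` by arc length on `[0, dist x y]`. -/
def IsGeodesicParam {X : Type*} [MetricSpace X] (f : ℝ → X) (x y : X) : Prop :=
  f 0 = x ∧ f (dist x y) = y ∧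
    ∀ s ∈ Set.Icc (0 : ℝ) (dist x y), ∀ t ∈ Set.Icc (0 : ℝ) (dist x y),
      dist (f s) (f t) = |s - t|

/-- δ-hyperbolicity via thin triangles: each side of a geodesic triangle is contained
in the δ-neighborhood of the union of the other two sides. -/
def ThinTriangles (X : Type*) [MetricSpace X] (δ : ℝ) : Prop :=
  ∀ (x y z : X) (f g h : ℝ → X),
    IsGeodesicParam f x y → IsGeodesicParam g y z → IsGeodesicParam h x z →
    ∀ t ∈ Set.Icc (0 : ℝ) (dist x z), ∃ s : ℝ,
      (s ∈ Set.Icc (0 : ℝ) (dist x y) ∧ dist (h t) (f s) ≤ δ) ∨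
      (s ∈ Set.Icc (0 : ℝ) (dist y z) ∧ dist (h t) (g s) ≤ δ)

/-- In a δ-hyperbolic geodesic space, every subpath of the broken geodesic
[x,y] ∪ [y,z] is a (1, 2⟨x|z⟩_y + 2δ)-quasigeodesic. -/
theorem broken_geodesic_quasigeodesic {X : Type*} [MetricSpace X]
    (δ : ℝ) (hδ : 0 ≤ δ)
    (hgeo : ∀ x y : X, ∃ f : ℝ → X, IsGeodesicParam f x y)
    (hhyp : ThinTriangles X δ)
    (x y z : X) (f g : ℝ → X)
    (hf : IsGeodesicParam f x y) (hg : IsGeodesicParam g y z)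
    (p : ℝ → X) (hp : ∀ t : ℝ, p t = if t ≤ dist x y then f t else g (t - dist x y)) :
    ∀ s ∈ Set.Icc (0 : ℝ) (dist x y + dist y z),
      ∀ t ∈ Set.Icc (0 : ℝ) (dist x y + dist y z),
        |s - t| - (2 * ((dist y x + dist y z - dist x z) / 2) + 2 * δ) ≤ dist (p s) (p t) ∧
        dist (p s) (p t) ≤ |s - t| + (2 * ((dist y x + dist y z - dist x z) / 2) + 2 * δ) := by
  obtain ⟨hf0, hfa, hfd⟩ := hf
  obtain ⟨hg0, hgb, hgd⟩ := hg
  set a := dist x y with ha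
  set b := dist y z with hb
  have hyx : dist y x = a := dist_comm y x
  have htri : dist x z ≤ a + b := dist_triangle x y z
  have ha0 : 0 ≤ a := dist_nonneg
  have hb0 : 0 ≤ b := dist_nonneg
  have key : ∀ s ∈ Set.Icc (0 : ℝ) (a + b), ∀ t ∈ Set.Icc (0 : ℝ) (a + b), s ≤ t →
      (t - s) - (2 * ((dist y x + b - dist x z) / 2) + 2 * δ) ≤ dist (p s) (p t) ∧
      dist (p s) (p t) ≤ (t - s) + (2 * ((dist y x + b - dist x z) / 2) + 2 * δ) := by
    rintro s ⟨hs0, hsab⟩ t ⟨ht0, htab⟩ hst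
    rw [hp s, hp t, hyx]
    by_cases hta : t ≤ a
    · have hsa : s ≤ a := le_trans hst hta
      rw [if_pos hsa, if_pos hta, hfd s ⟨hs0, hsa⟩ t ⟨ht0, hta⟩,
        abs_of_nonpos (by linarith)]
      constructor <;> linarith
    · push_neg at hta
      have hub : t - a ∈ Set.Icc (0 : ℝ) b := ⟨by linarith, by linarith⟩
      rw [if_neg (not_le.2 hta)]
      by_cases hsa : s ≤ a
      · rw [if_pos hsa]
        have h1 : dist (f s) y = a - s := by
          rw [← hfa, hfd s ⟨hs0, hsa⟩ a ⟨ha0, le_refl a⟩, abs_of_nonpos (by linarith)]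
          ring
        have h2 : dist y (g (t - a)) = t - a := by
          rw [← hg0, hgd 0 ⟨le_refl 0, hb0⟩ (t - a) hub, abs_of_nonpos (by linarith)]
          ring
        have hup : dist (f s) (g (t - a)) ≤ (a - s) + (t - a) := by
          calc dist (f s) (g (t - a)) ≤ dist (f s) y + dist y (g (t - a)) := dist_triangle _ _ _
            _ = (a - s) + (t - a) := by rw [h1, h2]
        have h3 : dist x (f s) = s := by
          rw [← hf0, hfd 0 ⟨le_refl 0, ha0⟩ s ⟨hs0, hsa⟩, abs_of_nonpos (by linarith)]
          ring
        have h4 : dist (g (t - a)) z = b - (t - a) := by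
          rw [← hgb, hgd (t - a) hub b ⟨hb0, le_refl b⟩, abs_of_nonpos (by linarith)]
          ring
        have hlow : dist x z ≤ s + dist (f s) (g (t - a)) + (b - (t - a)) := by
          calc dist x z ≤ dist x (f s) + dist (f s) z := dist_triangle _ _ _
            _ ≤ dist x (f s) + (dist (f s) (g (t - a)) + dist (g (t - a)) z) := by
                linarith [dist_triangle (f s) (g (t - a)) z]
            _ = s + dist (f s) (g (t - a)) + (b - (t - a)) := by rw [h3, h4]; ring
        constructor <;> linarith
      · push_neg at hsa
        have hsb : s - a ∈ Set.Icc (0 : ℝ) b := ⟨by linarith, by linarith⟩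
        rw [if_neg (not_le.2 hsa), hgd (s - a) hsb (t - a) hub, abs_of_nonpos (by linarith)]
        constructor <;> linarith
  intro s hs t ht
  rcases le_total s t with h | h
  · have := key s hs t ht h
    rw [abs_sub_comm, abs_of_nonneg (by linarith)]
    exact this
  · have := key t ht s hs h
    rw [abs_of_nonneg (by linarith), dist_comm (p s) (p t)]
    exact this
end
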